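/- Let B be a free R̃-module and let ∇₀: B/pB → (B/pB) ⊗_R Ω¹_{R/k} be a connection relative to k. Choose any additive map ∇′₀: B → B ⊗_{R̃} Ω¹_{R̃/W₂(k)} whose reduction modulo p equals ∇₀. Then the formula ∇̃(f ⊗ x) = x ⊗ df + f · (F̃*∇′₀)(x), where (F̃*∇′₀)(x) denotes the image of ∇′₀(x) ∈ B ⊗_{R̃} Ω¹_{R̃/W₂(k)} under the map b ⊗ ω ↦ (1 ⊗ b) ⊗ F̃*ω into F̃*B ⊗_{R̃} Ω¹_{R̃/W₂(k)}, defines a connection ∇̃ on F̃*B relative to W₂(k); this connection is independent of the choice of the lift ∇′₀; and the reduction of ∇̃ modulo p is the canonical Frobenius-pullback connection on F*(B/pB) = R ⊗_{F,R} (B/pB), namely the connection determined by f ⊗ x̄ ↦ x̄ ⊗ df. -/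

import Mathlib

/-!
Statement 8: Let `B` be a free `R̃`-module (`R̃` a flat `W₂(k)`-algebra, `R = R̃/pR̃`),
`Dconn : B/pB → (B/pB) ⊗_R Ω¹_{R/k}` a connection relative to `k`, and `∇′₀ : B → B ⊗ Ω¹_{R̃/W₂}`
any additive lift of `Dconn`.  Then `∇̃(f ⊗ x) = x ⊗ df + f·(F̃^*∇′₀)(x)` defines a connection
on `F̃^*B` relative to `W₂(k)`, independent of the choice of the lift `∇′₀`, whose reduction
modulo `p` is the canonical Frobenius-pullback connection `f ⊗ x̄ ↦ x̄ ⊗ df` on `F^*(B/pB)`.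

Here `F̃^*B = R̃ ⊗_{F̃,R̃} B` is formalized as `Twist F̃ B`; the pullback of forms
`F̃^* : Ω¹_{R̃/W₂} → Ω¹_{R̃/W₂}` (the additive map `a·db ↦ F̃(a)·d(F̃ b)`) is the hypothesis
`Φ`, and the induced map `b ⊗ ω ↦ (1 ⊗ b) ⊗ F̃^*ω` on `B ⊗ Ω¹_{R̃/W₂}` is the hypothesis `H`
(each is uniquely determined by its stated defining property).  As licensed by the context,
reduction modulo `p` is expressed via the identifications `Ω¹_{R/k} = Ω¹_{R̃/W₂}/p`,
`B/pB`, and membership in `p·(F̃^*B ⊗ Ω¹_{R̃/W₂})`.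
-/

open scoped TensorProduct

set_option synthInstance.maxHeartbeats 1000000
set_option maxHeartbeats 1000000

universe u

/-- A copy of the ring `R`, serving as the source of the ring endomorphism `f : R → R`. -/
def TwistSrc {R : Type u} [CommRing R] (f : R →+* R) : Type u := R

instance {R : Type u} [CommRing R] (f : R →+* R) : CommRing (TwistSrc f) :=
  inferInstanceAs (CommRing R)

/-- `R` is an algebra over its copy `TwistSrc f` via `f`. -/
instance {R : Type u} [CommRing R] (f : R →+* R) : Algebra (TwistSrc f) R :=
  (show TwistSrc f →+* R from f).toAlgebra

instance (priority := 100) {R : Type u} [CommRing R] (f : R →+* R) (V : Type*)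
    [AddCommGroup V] [Module R V] : Module (TwistSrc f) V :=
  inferInstanceAs (Module R V)

/-- The base change `R ⊗_{f,R} V` of an `R`-module `V` along the ring endomorphism
`f : R → R`; it is an `R`-module via the left tensor factor. -/
abbrev Twist {R : Type u} [CommRing R] (f : R →+* R) (V : Type*) [AddCommGroup V]
    [Module R V] : Type _ :=
  TensorProduct (TwistSrc f) R V

section Aux

variable {p : ℕ} [hp : Fact p.Prime] (k : Type u) [Field k] [CharP k p]
variable {Rt : Type u} [CommRing Rt] [Algebra (TruncatedWittVector p 2 k) Rt]

local notation "W2" => TruncatedWittVector p 2 k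
local notation "Ω1" => KaehlerDifferential (TruncatedWittVector p 2 k) Rt
local notation "dd" => KaehlerDifferential.D (TruncatedWittVector p 2 k) Rt

include k in
lemma aux_psq : ((p : Rt)) ^ 2 = 0 := by
  have h0 : ((p : W2)) ^ 2 = 0 := by
    have h : ((p : W2)) ^ 2 = WittVector.truncate 2 ((p : WittVector p k) ^ 2) := by
      rw [map_pow, map_natCast]
    rw [h]
    ext j
    rw [WittVector.coeff_truncate]
    rw [WittVector.coeff_p_pow_eq_zero p k (Nat.ne_of_lt j.isLt)]
    simp
  calc ((p : Rt)) ^ 2 = algebraMap W2 Rt ((p : W2) ^ 2) := by rw [map_pow, map_natCast]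
    _ = 0 := by rw [h0, map_zero]

lemma aux_d_Ft (Ft : Rt →+* Rt) (hFt : ∀ x : Rt, Ft x - x ^ p ∈ Ideal.span {(p : Rt)})
    (b : Rt) : ∃ η, dd (Ft b) = (p : Rt) • η := by
  obtain ⟨c, hc⟩ := Ideal.mem_span_singleton'.mp (hFt b)
  have hb : Ft b = b ^ p + c * (p : Rt) := by linear_combination -hc
  refine ⟨(b ^ (p - 1) • dd b) + dd c, ?_⟩
  rw [hb, map_add, Derivation.leibniz, Derivation.leibniz_pow, Derivation.map_natCast,
    smul_zero, zero_add, smul_add, ← Nat.cast_smul_eq_nsmul Rt]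

lemma aux_Phi_p (Ft : Rt →+* Rt) (hFt : ∀ x : Rt, Ft x - x ^ p ∈ Ideal.span {(p : Rt)})
    (Φ : Ω1 →+ Ω1) (hΦ : ∀ a b : Rt, Φ (a • dd b) = Ft a • dd (Ft b)) :
    ∀ ω : Ω1, ∃ η, Φ ω = (p : Rt) • η := by
  intro ω
  have hω : ω ∈ Submodule.span Rt (Set.range (dd)) := by
    rw [KaehlerDifferential.span_range_derivation]; trivial
  have key : ∀ a : Rt, ∃ η, Φ (a • ω) = (p : Rt) • η := by
    induction hω using Submodule.span_induction with
    | mem x hx =>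
      obtain ⟨b, rfl⟩ := hx
      intro a
      obtain ⟨η, hη⟩ := aux_d_Ft k Ft hFt b
      refine ⟨Ft a • η, ?_⟩
      rw [hΦ a b, hη, smul_smul, mul_comm, ← smul_smul]
    | zero => intro a; exact ⟨0, by simp⟩
    | add x y _ _ ihx ihy =>
      intro a
      obtain ⟨η₁, h₁⟩ := ihx a
      obtain ⟨η₂, h₂⟩ := ihy a
      exact ⟨η₁ + η₂, by rw [smul_add, map_add, h₁, h₂, smul_add]⟩
    | smul r x _ ih =>
      intro a
      obtain ⟨η, hη⟩ := ih (a * r)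
      exact ⟨η, by rw [smul_smul]; exact hη⟩
  obtain ⟨η, hη⟩ := key 1
  rw [one_smul] at hη
  exact ⟨η, hη⟩

variable {B : Type u} [AddCommGroup B] [Module Rt B]

lemma aux_tw (Ft : Rt →+* Rt) (c : Rt) (b : B) :
    ((1 : Rt) ⊗ₜ[TwistSrc Ft] (c • b) : Twist Ft B) = Ft c • ((1 : Rt) ⊗ₜ[TwistSrc Ft] b) := by
  rw [TensorProduct.smul_tmul', smul_eq_mul, mul_one]
  have h : (Ft c : Rt) = (show TwistSrc Ft from c) • (1 : Rt) := by
    rw [Algebra.smul_def, mul_one]; rfl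
  rw [h, TensorProduct.smul_tmul]; rfl

lemma aux_tw' (Ft : Rt →+* Rt) (f : Rt) (x : B) :
    (f ⊗ₜ[TwistSrc Ft] x : Twist Ft B) = f • ((1 : Rt) ⊗ₜ[TwistSrc Ft] x) := by
  rw [TensorProduct.smul_tmul', smul_eq_mul, mul_one]


variable (Ft : Rt →+* Rt)

lemma aux_H_smul (Φ : Ω1 →+ Ω1)
    (H : TensorProduct Rt B Ω1 →+ TensorProduct Rt (Twist Ft B) Ω1)
    (hH : ∀ (b : B) (ω : Ω1), H (b ⊗ₜ ω) = ((1 : Rt) ⊗ₜ[TwistSrc Ft] b) ⊗ₜ[Rt] Φ ω)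
    (c : Rt) (u : TensorProduct Rt B Ω1) : H (c • u) = Ft c • H u := by
  induction u using TensorProduct.induction_on with
  | zero => simp
  | tmul b ω =>
    rw [TensorProduct.smul_tmul', hH, hH, aux_tw Ft c b, ← TensorProduct.smul_tmul']
  | add x y hx hy => rw [smul_add, map_add, hx, hy, map_add, smul_add]

lemma aux_H_p (hFt : ∀ x : Rt, Ft x - x ^ p ∈ Ideal.span {(p : Rt)})
    (Φ : Ω1 →+ Ω1) (hΦ : ∀ a b : Rt, Φ (a • dd b) = Ft a • dd (Ft b))
    (H : TensorProduct Rt B Ω1 →+ TensorProduct Rt (Twist Ft B) Ω1)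
    (hH : ∀ (b : B) (ω : Ω1), H (b ⊗ₜ ω) = ((1 : Rt) ⊗ₜ[TwistSrc Ft] b) ⊗ₜ[Rt] Φ ω)
    (u : TensorProduct Rt B Ω1) : ∃ w, H u = (p : Rt) • w := by
  induction u using TensorProduct.induction_on with
  | zero => exact ⟨0, by simp⟩
  | tmul b ω =>
    obtain ⟨η, hη⟩ := aux_Phi_p k Ft hFt Φ hΦ ω
    exact ⟨((1 : Rt) ⊗ₜ[TwistSrc Ft] b) ⊗ₜ[Rt] η,
      by rw [hH, hη, TensorProduct.tmul_smul]⟩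
  | add x y hx hy =>
    obtain ⟨w₁, h₁⟩ := hx
    obtain ⟨w₂, h₂⟩ := hy
    exact ⟨w₁ + w₂, by rw [map_add, h₁, h₂, smul_add]⟩

lemma aux_pH (hFt : ∀ x : Rt, Ft x - x ^ p ∈ Ideal.span {(p : Rt)})
    (Φ : Ω1 →+ Ω1) (hΦ : ∀ a b : Rt, Φ (a • dd b) = Ft a • dd (Ft b))
    (H : TensorProduct Rt B Ω1 →+ TensorProduct Rt (Twist Ft B) Ω1)
    (hH : ∀ (b : B) (ω : Ω1), H (b ⊗ₜ ω) = ((1 : Rt) ⊗ₜ[TwistSrc Ft] b) ⊗ₜ[Rt] Φ ω)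
    (u : TensorProduct Rt B Ω1) : (p : Rt) • H u = 0 := by
  obtain ⟨w, hw⟩ := aux_H_p k Ft hFt Φ hΦ H hH u
  rw [hw, smul_smul, ← pow_two, aux_psq k, zero_smul]

include k in
lemma aux_ker (u : TensorProduct Rt B Ω1)
    (hu : TensorProduct.map (LinearMap.range ((p : Rt) • (LinearMap.id : B →ₗ[Rt] B))).mkQ
      (LinearMap.range ((p : Rt) • (LinearMap.id : Ω1 →ₗ[Rt] Ω1))).mkQ u = 0) :
    ∃ w, u = (p : Rt) • w := by
  have h1 : Function.Exact ((p : Rt) • (LinearMap.id : B →ₗ[Rt] B))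
      (LinearMap.range ((p : Rt) • (LinearMap.id : B →ₗ[Rt] B))).mkQ :=
    LinearMap.exact_iff.mpr (Submodule.ker_mkQ _)
  have h2 : Function.Exact ((p : Rt) • (LinearMap.id : Ω1 →ₗ[Rt] Ω1))
      (LinearMap.range ((p : Rt) • (LinearMap.id : Ω1 →ₗ[Rt] Ω1))).mkQ :=
    LinearMap.exact_iff.mpr (Submodule.ker_mkQ _)
  have hk := TensorProduct.map_ker h1 (Submodule.mkQ_surjective _) h2 (Submodule.mkQ_surjective _)
  have hmem : u ∈ LinearMap.ker (TensorProduct.map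
      (LinearMap.range ((p : Rt) • (LinearMap.id : B →ₗ[Rt] B))).mkQ
      (LinearMap.range ((p : Rt) • (LinearMap.id : Ω1 →ₗ[Rt] Ω1))).mkQ) := hu
  rw [hk, LinearMap.lTensor_smul, LinearMap.lTensor_id, LinearMap.rTensor_smul,
    LinearMap.rTensor_id, sup_idem] at hmem
  obtain ⟨w, hw⟩ := hmem
  exact ⟨w, by simpa using hw.symm⟩

end Aux

theorem frobenius_pullback_connection
    (p : ℕ) [Fact p.Prime]
    (k : Type u) [Field k] [CharP k p] [PerfectRing k p]
    (Rt : Type u) [CommRing Rt] [Algebra (TruncatedWittVector p 2 k) Rt]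
    (hRflat : Module.Flat (TruncatedWittVector p 2 k) Rt)
    -- a free `R̃`-module `B`:
    (B : Type u) [AddCommGroup B] [Module Rt B] [Module.Free Rt B]
    -- a Frobenius lift `F̃`:
    (Ft : Rt →+* Rt) (hFt : ∀ x : Rt, Ft x - x ^ p ∈ Ideal.span {(p : Rt)})
    -- the pullback `F̃^*` of 1-forms, `a·db ↦ F̃(a)·d(F̃ b)`:
    (Φ : KaehlerDifferential (TruncatedWittVector p 2 k) Rt →+
      KaehlerDifferential (TruncatedWittVector p 2 k) Rt)
    (hΦ : ∀ a b : Rt,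
      Φ (a • KaehlerDifferential.D (TruncatedWittVector p 2 k) Rt b) =
        Ft a • KaehlerDifferential.D (TruncatedWittVector p 2 k) Rt (Ft b))
    -- the induced map `H : B ⊗ Ω¹ → F̃^*B ⊗ Ω¹`, `b ⊗ ω ↦ (1 ⊗ b) ⊗ F̃^*ω`:
    (H : TensorProduct Rt B (KaehlerDifferential (TruncatedWittVector p 2 k) Rt) →+
      TensorProduct Rt (Twist Ft B) (KaehlerDifferential (TruncatedWittVector p 2 k) Rt))
    (hH : ∀ (b : B) (ω : KaehlerDifferential (TruncatedWittVector p 2 k) Rt),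
      H (b ⊗ₜ ω) = (((1 : Rt) ⊗ₜ[TwistSrc Ft] b : Twist Ft B)) ⊗ₜ[Rt] Φ ω) :
    -- `pB`, `B/pB`, `p·Ω¹`, `Ω¹_{R/k} = Ω¹/pΩ¹` and the reduction maps:
    let pB : Submodule Rt B := LinearMap.range ((p : Rt) • (LinearMap.id : B →ₗ[Rt] B))
    let pΩ : Submodule Rt (KaehlerDifferential (TruncatedWittVector p 2 k) Rt) :=
      LinearMap.range ((p : Rt) • (LinearMap.id :
        KaehlerDifferential (TruncatedWittVector p 2 k) Rt →ₗ[Rt]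
          KaehlerDifferential (TruncatedWittVector p 2 k) Rt))
    let κB := pB.mkQ
    let κΩ := pΩ.mkQ
    -- a connection `Dconn` on `B/pB` relative to `k`:
    ∀ Dconn : (B ⧸ pB) →+
        TensorProduct Rt (B ⧸ pB) (KaehlerDifferential (TruncatedWittVector p 2 k) Rt ⧸ pΩ),
      (∀ (f : Rt) (m : B ⧸ pB),
        Dconn (f • m) = m ⊗ₜ[Rt] (κΩ (KaehlerDifferential.D (TruncatedWittVector p 2 k) Rt f)) +
          f • Dconn m) →
    -- an additive lift `∇′₀` of `Dconn`:
    ∀ L0 : B →+ TensorProduct Rt B (KaehlerDifferential (TruncatedWittVector p 2 k) Rt),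
      (∀ x : B, TensorProduct.map κB κΩ (L0 x) = Dconn (κB x)) →
      -- (1) the formula `∇̃(f ⊗ x) = x ⊗ df + f·(F̃^*∇′₀)(x)` defines a unique additive map:
      (∃! nt : Twist Ft B →+
          TensorProduct Rt (Twist Ft B) (KaehlerDifferential (TruncatedWittVector p 2 k) Rt),
        ∀ (f : Rt) (x : B),
          nt (f ⊗ₜ[TwistSrc Ft] x) =
            (((1 : Rt) ⊗ₜ[TwistSrc Ft] x : Twist Ft B)) ⊗ₜ[Rt]
              (KaehlerDifferential.D (TruncatedWittVector p 2 k) Rt f) + f • H (L0 x)) ∧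
      -- and any such map
      (∀ nt : Twist Ft B →+
          TensorProduct Rt (Twist Ft B) (KaehlerDifferential (TruncatedWittVector p 2 k) Rt),
        (∀ (f : Rt) (x : B),
          nt (f ⊗ₜ[TwistSrc Ft] x) =
            (((1 : Rt) ⊗ₜ[TwistSrc Ft] x : Twist Ft B)) ⊗ₜ[Rt]
              (KaehlerDifferential.D (TruncatedWittVector p 2 k) Rt f) + f • H (L0 x)) →
        -- (2) is a connection on `F̃^*B` relative to `W₂(k)`:
        (∀ (r : Rt) (z : Twist Ft B),
          nt (r • z) = z ⊗ₜ[Rt] (KaehlerDifferential.D (TruncatedWittVector p 2 k) Rt r) +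
            r • nt z) ∧
        -- (3) is independent of the choice of the lift `∇′₀`:
        (∀ L1 : B →+ TensorProduct Rt B (KaehlerDifferential (TruncatedWittVector p 2 k) Rt),
          (∀ x : B, TensorProduct.map κB κΩ (L1 x) = Dconn (κB x)) →
          ∀ nt₁ : Twist Ft B →+
            TensorProduct Rt (Twist Ft B)
              (KaehlerDifferential (TruncatedWittVector p 2 k) Rt),
          (∀ (f : Rt) (x : B),
            nt₁ (f ⊗ₜ[TwistSrc Ft] x) =
              (((1 : Rt) ⊗ₜ[TwistSrc Ft] x : Twist Ft B)) ⊗ₜ[Rt]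
                (KaehlerDifferential.D (TruncatedWittVector p 2 k) Rt f) + f • H (L1 x)) →
          nt₁ = nt) ∧
        -- (4) reduces modulo `p` to the canonical Frobenius-pullback connection
        -- `f ⊗ x̄ ↦ x̄ ⊗ df` on `F^*(B/pB)`:
        (∀ (f : Rt) (x : B),
          nt (f ⊗ₜ[TwistSrc Ft] x) -
            (((1 : Rt) ⊗ₜ[TwistSrc Ft] x : Twist Ft B)) ⊗ₜ[Rt]
              (KaehlerDifferential.D (TruncatedWittVector p 2 k) Rt f) ∈
            LinearMap.range ((p : Rt) • (LinearMap.id :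
              TensorProduct Rt (Twist Ft B)
                  (KaehlerDifferential (TruncatedWittVector p 2 k) Rt) →ₗ[Rt]
                TensorProduct Rt (Twist Ft B)
                  (KaehlerDifferential (TruncatedWittVector p 2 k) Rt))))) := by
  intro pB pΩ κB κΩ Dconn hD L0 hL0
  have hker : ∀ u, TensorProduct.map κB κΩ u = 0 → ∃ w, u = (p : Rt) • w := fun u hu =>
    aux_ker k u hu
  have hΦdc : ∀ c : Rt, Φ (KaehlerDifferential.D (TruncatedWittVector p 2 k) Rt c) =
      KaehlerDifferential.D (TruncatedWittVector p 2 k) Rt (Ft c) := by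
    intro c
    have := hΦ 1 c
    rwa [one_smul, map_one, one_smul] at this
  have hkey : ∀ (L : B →+ TensorProduct Rt B (KaehlerDifferential (TruncatedWittVector p 2 k) Rt)),
      (∀ x : B, TensorProduct.map κB κΩ (L x) = Dconn (κB x)) →
      ∀ (c : Rt) (x : B),
        H (L (c • x)) = Ft c • H (L x) +
          ((1 : Rt) ⊗ₜ[TwistSrc Ft] x) ⊗ₜ[Rt]
            (KaehlerDifferential.D (TruncatedWittVector p 2 k) Rt (Ft c)) := by
    intro L hL c x
    have hu0 : TensorProduct.map κB κΩ (L (c • x) - c • L x -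
        x ⊗ₜ[Rt] (KaehlerDifferential.D (TruncatedWittVector p 2 k) Rt c)) = 0 := by
      have e1 : TensorProduct.map κB κΩ (L (c • x)) = Dconn (c • κB x) := by
        rw [hL, LinearMap.map_smul]
      have e2 : TensorProduct.map κB κΩ (c • L x) = c • Dconn (κB x) := by
        rw [LinearMap.map_smul, hL]
      rw [map_sub, map_sub, e1, e2, TensorProduct.map_tmul, hD]
      abel
    obtain ⟨w, hw⟩ := hker _ hu0
    have hLcX : L (c • x) = c • L x +
        x ⊗ₜ[Rt] (KaehlerDifferential.D (TruncatedWittVector p 2 k) Rt c) + (p : Rt) • w := by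
      rw [← hw]; abel
    have hpw : H ((p : Rt) • w) = 0 := by
      rw [aux_H_smul k Ft Φ H hH, map_natCast, aux_pH k Ft hFt Φ hΦ H hH]
    rw [hLcX, map_add, map_add, aux_H_smul k Ft Φ H hH, hH, hΦdc, hpw, add_zero]
  -- the candidate additive map
  let Gh : Rt →+ (B →+ TensorProduct Rt (Twist Ft B)
      (KaehlerDifferential (TruncatedWittVector p 2 k) Rt)) :=
    AddMonoidHom.mk' (fun f => AddMonoidHom.mk'
      (fun x => ((1 : Rt) ⊗ₜ[TwistSrc Ft] x) ⊗ₜ[Rt]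
          (KaehlerDifferential.D (TruncatedWittVector p 2 k) Rt f) + f • H (L0 x))
      (fun x y => by
        rw [TensorProduct.tmul_add, TensorProduct.add_tmul, map_add, map_add, smul_add]
        abel))
      (fun f g => by
        ext x
        simp only [AddMonoidHom.mk'_apply, AddMonoidHom.add_apply]
        rw [map_add, TensorProduct.tmul_add, add_smul]
        abel)
  have hbal : ∀ (r : TwistSrc Ft) (f : Rt) (x : B), Gh (r • f) x = Gh f (r • x) := by
    intro r f x
    let r' : Rt := r
    show ((1 : Rt) ⊗ₜ[TwistSrc Ft] x) ⊗ₜ[Rt]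
        (KaehlerDifferential.D (TruncatedWittVector p 2 k) Rt (Ft r' * f)) +
        (Ft r' * f) • H (L0 x)
      = ((1 : Rt) ⊗ₜ[TwistSrc Ft] (r' • x)) ⊗ₜ[Rt]
        (KaehlerDifferential.D (TruncatedWittVector p 2 k) Rt f) + f • H (L0 (r' • x))
    rw [hkey L0 hL0 r' x, Derivation.leibniz, TensorProduct.tmul_add, TensorProduct.tmul_smul,
      TensorProduct.tmul_smul, aux_tw Ft r' x, ← TensorProduct.smul_tmul', smul_add, smul_smul,
      mul_comm f (Ft r')]
    abel
  let nt0 := TensorProduct.liftAddHom Gh hbal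
  have hnt0 : ∀ (f : Rt) (x : B),
      nt0 (f ⊗ₜ[TwistSrc Ft] x) =
        (((1 : Rt) ⊗ₜ[TwistSrc Ft] x : Twist Ft B)) ⊗ₜ[Rt]
          (KaehlerDifferential.D (TruncatedWittVector p 2 k) Rt f) + f • H (L0 x) :=
    fun f x => rfl
  constructor
  · refine ⟨nt0, hnt0, ?_⟩
    intro nt' hnt'
    ext z
    induction z using TensorProduct.induction_on with
    | zero => rw [map_zero, map_zero]
    | tmul f x => rw [hnt', hnt0]
    | add a b ha hb => rw [map_add, map_add, ha, hb]
  · intro nt hnt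
    refine ⟨?_, ?_, ?_⟩
    · -- Leibniz rule
      intro r z
      induction z using TensorProduct.induction_on with
      | zero => rw [smul_zero, map_zero, TensorProduct.zero_tmul, smul_zero, add_zero]
      | tmul f x =>
        have h1 : r • (f ⊗ₜ[TwistSrc Ft] x : Twist Ft B) = (r * f) ⊗ₜ[TwistSrc Ft] x := by
          rw [TensorProduct.smul_tmul', smul_eq_mul]
        rw [h1, hnt, hnt, Derivation.leibniz, TensorProduct.tmul_add, TensorProduct.tmul_smul,
          TensorProduct.tmul_smul, aux_tw' Ft f x, ← TensorProduct.smul_tmul', mul_smul,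
          smul_add]
        abel
      | add z1 z2 h1 h2 =>
        rw [smul_add, map_add, h1, h2, map_add, TensorProduct.add_tmul, smul_add]
        abel
    · -- independence of the lift
      intro L1 hL1 nt1 hnt1
      have hHeq : ∀ x : B, H (L1 x) = H (L0 x) := by
        intro x
        have h0 : TensorProduct.map κB κΩ (L1 x - L0 x) = 0 := by
          rw [map_sub, hL1, hL0, sub_self]
        obtain ⟨w, hw⟩ := hker _ h0
        have hz : H (L1 x) - H (L0 x) = 0 := by
          erw [← map_sub H, hw, aux_H_smul k Ft Φ H hH, map_natCast,
            aux_pH k Ft hFt Φ hΦ H hH]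
        exact sub_eq_zero.mp hz
      ext z
      induction z using TensorProduct.induction_on with
      | zero => rw [map_zero, map_zero]
      | tmul f x => rw [hnt1, hnt, hHeq]
      | add a b ha hb => rw [map_add, map_add, ha, hb]
    · -- reduction mod p
      intro f x
      rw [hnt, show ∀ a b : TensorProduct Rt (Twist Ft B) (KaehlerDifferential (TruncatedWittVector p 2 k) Rt), a + b - a = b from fun a b => add_sub_cancel_left a b]
      obtain ⟨w, hw⟩ := aux_H_p k Ft hFt Φ hΦ H hH (L0 x)
      refine ⟨f • w, ?_⟩
      simp only [LinearMap.smul_apply, LinearMap.id_coe, id_eq]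
      rw [hw, smul_comm]
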